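/- The Grossman–Larson product U∗V := U₍₁₎·(U₍₂₎▷V) on the tensor algebra T(M) over a magmatic algebra is associative with unit 1. -/

import Mathlib

open TensorProduct TensorAlgebra

variable (k M : Type*) [CommRing k] [AddCommGroup M] [Module k M]

/-- The linear map sending `x ∈ M` to the primitive element `ι x ⊗ 1 + 1 ⊗ ι x`. -/
noncomputable def primMap : M →ₗ[k] TensorAlgebra k M ⊗[k] TensorAlgebra k M :=
  ((TensorProduct.mk k (TensorAlgebra k M) (TensorAlgebra k M)).flip 1).comp (ι k) +
    (TensorProduct.mk k (TensorAlgebra k M) (TensorAlgebra k M) 1).comp (ι k)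

/-- The unshuffle coproduct on the tensor algebra: the unique algebra morphism
`Δ : T(M) → T(M) ⊗ T(M)` for which every element of `M` is primitive. -/
noncomputable def unshuffle :
    TensorAlgebra k M →ₐ[k] TensorAlgebra k M ⊗[k] TensorAlgebra k M :=
  TensorAlgebra.lift k (primMap k M)

/-- The counit of the tensor algebra: the algebra morphism killing `M`. -/
noncomputable def counit : TensorAlgebra k M →ₐ[k] k :=
  TensorAlgebra.lift k (0 : M →ₗ[k] k)

/-- The Grossman–Larson product `U ∗ V := U₍₁₎ · (U₍₂₎ ▷ V)` on the tensor algebra,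
built from the unshuffle coproduct and the extended product `t`. -/
noncomputable def glProd {k M : Type*} [CommRing k] [AddCommGroup M] [Module k M]
    (t : TensorAlgebra k M →ₗ[k] TensorAlgebra k M →ₗ[k] TensorAlgebra k M)
    (U V : TensorAlgebra k M) : TensorAlgebra k M :=
  LinearMap.mul' k (TensorAlgebra k M)
    (TensorProduct.map LinearMap.id (t.flip V) (unshuffle k M U))

section Aux

variable {k M}

local notation "𝕋" => TensorAlgebra k M
local notation "Δ" => unshuffle k M
local notation "Dl" => AlgHom.toLinearMap (unshuffle k M)
local notation "ε" => counit k M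
local notation "μ" => LinearMap.mul' k (TensorAlgebra k M)
local notation "ιp" => LinearMap.range (ι k : M →ₗ[k] TensorAlgebra k M)

lemma unshuffle_ι (x : M) : Δ (ι k x) = ι k x ⊗ₜ[k] 1 + 1 ⊗ₜ[k] ι k x := by
  simp [unshuffle, primMap, TensorAlgebra.lift_ι_apply]

lemma counit_ι (x : M) : ε (ι k x) = (0 : k) := by
  simp [counit, TensorAlgebra.lift_ι_apply]

lemma algMap_eq {A B : Type*} [Ring A] [Ring B] [Algebra k A] [Algebra k B]
    {A' B' : Type*} [Ring A'] [Ring B'] [Algebra k A'] [Algebra k B']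
    (f : A →ₐ[k] A') (g : B →ₐ[k] B') (z : A ⊗[k] B) :
    Algebra.TensorProduct.map f g z = TensorProduct.map f.toLinearMap g.toLinearMap z := by
  induction z using TensorProduct.induction_on with
  | zero => simp
  | tmul => simp
  | add x y hx hy => simp [hx, hy]

lemma assoc_coe (z : (𝕋 ⊗[k] 𝕋) ⊗[k] 𝕋) :
    (Algebra.TensorProduct.assoc k k k 𝕋 𝕋 𝕋) z = (TensorProduct.assoc k 𝕋 𝕋 𝕋) z := by
  rfl

lemma tttc_coe (z : (𝕋 ⊗[k] 𝕋) ⊗[k] (𝕋 ⊗[k] 𝕋)) :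
    (Algebra.TensorProduct.tensorTensorTensorComm k k k k 𝕋 𝕋 𝕋 𝕋) z =
      (TensorProduct.tensorTensorTensorComm k 𝕋 𝕋 𝕋 𝕋) z := by
  rfl

/-- Coassociativity, pointwise. -/
lemma coassoc (U : 𝕋) :
    (TensorProduct.assoc k 𝕋 𝕋 𝕋) (TensorProduct.map Dl LinearMap.id (Δ U)) =
      TensorProduct.map LinearMap.id Dl (Δ U) := by
  have h : ((Algebra.TensorProduct.assoc k k k 𝕋 𝕋 𝕋 : _ ≃ₐ[k] _) : _ →ₐ[k] _).comp
        ((Algebra.TensorProduct.map Δ (AlgHom.id k 𝕋)).comp Δ) =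
      (Algebra.TensorProduct.map (AlgHom.id k 𝕋) Δ).comp Δ := by
    apply TensorAlgebra.hom_ext
    apply LinearMap.ext; intro x
    simp only [LinearMap.comp_apply, AlgHom.toLinearMap_apply, AlgHom.comp_apply,
      unshuffle_ι, map_add, Algebra.TensorProduct.map_tmul, AlgHom.coe_id, id_eq,
      map_one, Algebra.TensorProduct.one_def, add_tmul, tmul_add,
      Algebra.TensorProduct.assoc_tmul]
    abel
  have h2 := DFunLike.congr_fun h U
  simp only [AlgHom.coe_comp, Function.comp_apply, algMap_eq, AlgHom.comp_toLinearMap,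
    AlgHom.coe_coe, AlgHom.toLinearMap_id] at h2
  rw [← assoc_coe]
  exact h2

/-- Cocommutativity: swapping the middle two legs of `Δ² U` does nothing. -/
lemma swap23 (U : 𝕋) :
    (TensorProduct.tensorTensorTensorComm k 𝕋 𝕋 𝕋 𝕋)
        (TensorProduct.map Dl Dl (Δ U)) = TensorProduct.map Dl Dl (Δ U) := by
  have h : (Algebra.TensorProduct.tensorTensorTensorComm k k k k 𝕋 𝕋 𝕋 𝕋).toAlgHom.comp
        ((Algebra.TensorProduct.map Δ Δ).comp Δ) =
      (Algebra.TensorProduct.map Δ Δ).comp Δ := by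
    apply TensorAlgebra.hom_ext
    apply LinearMap.ext; intro x
    simp only [LinearMap.comp_apply, AlgHom.toLinearMap_apply, AlgHom.comp_apply,
      unshuffle_ι, map_add, Algebra.TensorProduct.map_tmul, map_one,
      Algebra.TensorProduct.one_def, tmul_add, add_tmul,
      AlgEquiv.toAlgHom_eq_coe, AlgHom.coe_coe, AlgEquiv.coe_algHom,
      Algebra.TensorProduct.tensorTensorTensorComm_tmul]
    abel
  have h2 := DFunLike.congr_fun h U
  simp only [AlgHom.coe_comp, Function.comp_apply, algMap_eq, AlgEquiv.toAlgHom_eq_coe,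
    AlgHom.coe_coe] at h2
  rw [← tttc_coe]
  exact h2

/-- Right counit, pointwise, in `glProd`-compatible form. -/
lemma counit_right (U : 𝕋) :
    μ (TensorProduct.map LinearMap.id
      ((Algebra.linearMap k 𝕋).comp (counit k M).toLinearMap) (Δ U)) = U := by
  have h : ((Algebra.TensorProduct.rid k k 𝕋 : 𝕋 ⊗[k] k ≃ₐ[k] 𝕋) : _ →ₐ[k] _).comp
        ((Algebra.TensorProduct.map (AlgHom.id k 𝕋) ε).comp Δ) = AlgHom.id k 𝕋 := by
    apply TensorAlgebra.hom_ext
    apply LinearMap.ext; intro x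
    simp [unshuffle_ι, Algebra.TensorProduct.one_def, counit_ι,
      Algebra.TensorProduct.rid_tmul]
  have h2 := DFunLike.congr_fun h U
  simp only [AlgHom.coe_comp, Function.comp_apply, algMap_eq, AlgHom.coe_id, id_eq,
    AlgHom.toLinearMap_id] at h2
  have h3 : ∀ z : 𝕋 ⊗[k] k, μ (TensorProduct.map LinearMap.id (Algebra.linearMap k 𝕋) z) =
      (Algebra.TensorProduct.rid k k 𝕋) z := by
    intro z
    induction z using TensorProduct.induction_on with
    | zero => simp
    | tmul a r => simp [Algebra.TensorProduct.rid_tmul, Algebra.algebraMap_eq_smul_one,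
        mul_smul_comm]
    | add x y hx hy => simp [hx, hy]
  have h4 : TensorProduct.map LinearMap.id
      ((Algebra.linearMap k 𝕋).comp (counit k M).toLinearMap) (Δ U)
      = TensorProduct.map LinearMap.id (Algebra.linearMap k 𝕋)
        (TensorProduct.map LinearMap.id (counit k M).toLinearMap (Δ U)) := by
    rw [← LinearMap.comp_apply, ← TensorProduct.map_comp]; simp
  rw [h4, h3]
  exact h2

/-- Induction over the tensor algebra by (homogeneous) degree. -/
lemma degree_induction {P : 𝕋 → Prop} (h0 : P 0) (hadd : ∀ a b, P a → P b → P (a + b))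
    (hhom : ∀ n : ℕ, ∀ U ∈ (ιp) ^ n, P U) : ∀ U, P U := by
  intro U
  refine DirectSum.Decomposition.inductionOn ((LinearMap.range (ι k : M →ₗ[k] 𝕋) ^ ·)) h0
    (fun {i} m => hhom i m m.2) (fun a b ha hb => hadd a b ha hb) U

end Aux
section Aux2
variable {k M : Type*} [CommRing k] [AddCommGroup M] [Module k M]

local notation "𝕋" => TensorAlgebra k M
local notation "Δ" => unshuffle k M
local notation "ε" => counit k M
local notation "μ" => LinearMap.mul' k (TensorAlgebra k M)
local notation "ιp" => LinearMap.range (ι k : M →ₗ[k] TensorAlgebra k M)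

variable (t : TensorAlgebra k M →ₗ[k] TensorAlgebra k M →ₗ[k] TensorAlgebra k M)
variable (m : M →ₗ[k] M →ₗ[k] M)

lemma t_alg (hone : ∀ W, t 1 W = W) (r : k) (W : 𝕋) : t (algebraMap k 𝕋 r) W = r • W := by
  rw [Algebra.algebraMap_eq_smul_one, map_smul, LinearMap.smul_apply, hone]

lemma tι_one (hcounit : ∀ U, t U 1 = algebraMap k 𝕋 (ε U)) (x : M) :
    t (ι k x) 1 = 0 := by
  rw [hcounit, counit_ι, map_zero]

lemma t_ι_mem (hcounit : ∀ U, t U 1 = algebraMap k 𝕋 (ε U))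
    (hbase : ∀ x y : M, t (ι k x) (ι k y) = ι k (m x y))
    (hleib : ∀ (x : M) (V W : 𝕋), t (ι k x) (V * W) = t (ι k x) V * W + V * t (ι k x) W)
    (x : M) : ∀ n : ℕ, ∀ U ∈ (ιp) ^ n, t (ι k x) U ∈ (ιp) ^ n := by
  intro n
  induction n with
  | zero =>
    intro U hU
    rw [pow_zero] at hU ⊢
    rw [Submodule.mem_one] at hU
    obtain ⟨r, rfl⟩ := hU
    rw [Algebra.algebraMap_eq_smul_one, map_smul, tι_one t hcounit, smul_zero]
    exact zero_mem _
  | succ n ih =>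
    intro U hU
    rw [pow_succ'] at hU ⊢
    refine Submodule.mul_induction_on hU ?_ ?_
    · rintro a ⟨y, rfl⟩ b hb
      rw [hleib, hbase]
      exact add_mem (Submodule.mul_mem_mul ⟨m x y, rfl⟩ hb)
        (Submodule.mul_mem_mul ⟨y, rfl⟩ (ih b hb))
    · intro a b ha hb
      rw [map_add]
      exact add_mem ha hb

lemma Gaux1 (hbase : ∀ x y : M, t (ι k x) (ι k y) = ι k (m x y))
    (hleib : ∀ (x : M) (V W : 𝕋), t (ι k x) (V * W) = t (ι k x) V * W + V * t (ι k x) W)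
    (x y : M) (z : 𝕋 ⊗[k] 𝕋) :
    TensorProduct.map (t (ι k x)) LinearMap.id ((ι k y ⊗ₜ[k] 1 + 1 ⊗ₜ[k] ι k y) * z) =
      (ι k (m x y) ⊗ₜ[k] 1) * z +
        (ι k y ⊗ₜ[k] 1 + 1 ⊗ₜ[k] ι k y) * TensorProduct.map (t (ι k x)) LinearMap.id z := by
  induction z using TensorProduct.induction_on with
  | zero => simp
  | tmul a c =>
    simp only [add_mul, mul_add, Algebra.TensorProduct.tmul_mul_tmul, one_mul, mul_one,
      map_add, TensorProduct.map_tmul, LinearMap.id_coe, id_eq, hleib, hbase, add_tmul]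
    abel
  | add z w hz hw =>
    simp only [mul_add, map_add] at *
    rw [hz, hw]
    abel

lemma Gaux2 (hbase : ∀ x y : M, t (ι k x) (ι k y) = ι k (m x y))
    (hleib : ∀ (x : M) (V W : 𝕋), t (ι k x) (V * W) = t (ι k x) V * W + V * t (ι k x) W)
    (x y : M) (z : 𝕋 ⊗[k] 𝕋) :
    TensorProduct.map LinearMap.id (t (ι k x)) ((ι k y ⊗ₜ[k] 1 + 1 ⊗ₜ[k] ι k y) * z) =
      (1 ⊗ₜ[k] ι k (m x y)) * z +
        (ι k y ⊗ₜ[k] 1 + 1 ⊗ₜ[k] ι k y) * TensorProduct.map LinearMap.id (t (ι k x)) z := by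
  induction z using TensorProduct.induction_on with
  | zero => simp
  | tmul a c =>
    simp only [add_mul, mul_add, Algebra.TensorProduct.tmul_mul_tmul, one_mul, mul_one,
      map_add, TensorProduct.map_tmul, LinearMap.id_coe, id_eq, hleib, hbase, tmul_add]
    abel
  | add z w hz hw =>
    simp only [mul_add, map_add] at *
    rw [hz, hw]
    abel

/-- `Δ` of the action of a primitive element (key coderivation property). -/
lemma delta_tι (hcounit : ∀ U, t U 1 = algebraMap k 𝕋 (ε U))
    (hbase : ∀ x y : M, t (ι k x) (ι k y) = ι k (m x y))
    (hleib : ∀ (x : M) (V W : 𝕋), t (ι k x) (V * W) = t (ι k x) V * W + V * t (ι k x) W)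
    (x : M) : ∀ U : 𝕋, Δ (t (ι k x) U) =
      TensorProduct.map (t (ι k x)) LinearMap.id (Δ U) +
        TensorProduct.map LinearMap.id (t (ι k x)) (Δ U) := by
  refine degree_induction (by simp) (fun a b ha hb => ?_) ?_
  · simp only [map_add, ha, hb]; abel
  · intro n
    induction n with
    | zero =>
      intro U hU
      rw [pow_zero, Submodule.mem_one] at hU
      obtain ⟨r, rfl⟩ := hU
      rw [Algebra.algebraMap_eq_smul_one, map_smul, tι_one t hcounit, smul_zero, map_zero]
      rw [map_smul, map_smul, map_smul, map_one, Algebra.TensorProduct.one_def,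
        TensorProduct.map_tmul, TensorProduct.map_tmul, tι_one t hcounit]
      simp
    | succ n ih =>
      intro U hU
      rw [pow_succ'] at hU
      refine Submodule.mul_induction_on hU ?_ ?_
      · rintro a ⟨y, rfl⟩ b hb
        rw [hleib, hbase, map_add, map_mul, map_mul, unshuffle_ι, unshuffle_ι, ih b hb,
          map_mul, unshuffle_ι, Gaux1 t m hbase hleib, Gaux2 t m hbase hleib]
        simp only [add_mul, mul_add, add_tmul]
        abel
      · intro a b ha hb
        simp only [map_add, ha, hb]
        abel
end Aux2
section Aux3
variable {k M : Type*} [CommRing k] [AddCommGroup M] [Module k M]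

local notation "𝕋" => TensorAlgebra k M
local notation "Δ" => unshuffle k M
local notation "ε" => counit k M
local notation "μ" => LinearMap.mul' k (TensorAlgebra k M)
local notation "ιp" => LinearMap.range (ι k : M →ₗ[k] TensorAlgebra k M)

/-- Componentwise double action `tsq s (a ⊗ b) (c ⊗ d) = s a c ⊗ s b d`. -/
noncomputable def tsq (s : 𝕋 →ₗ[k] 𝕋 →ₗ[k] 𝕋) :
    (𝕋 ⊗[k] 𝕋) →ₗ[k] (𝕋 ⊗[k] 𝕋) →ₗ[k] 𝕋 ⊗[k] 𝕋 :=
  TensorProduct.lift (LinearMap.compl₂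
    ((TensorProduct.mapBilinear (RingHom.id k) 𝕋 𝕋 𝕋 𝕋).comp s) s)

@[simp] lemma tsq_tmul (s : 𝕋 →ₗ[k] 𝕋 →ₗ[k] 𝕋) (a b : 𝕋) (z : 𝕋 ⊗[k] 𝕋) :
    tsq s (a ⊗ₜ[k] b) z = TensorProduct.map (s a) (s b) z := by
  simp [tsq, TensorProduct.mapBilinear_apply]

/-- The GL product as a bilinear map. -/
noncomputable def glL (t : 𝕋 →ₗ[k] 𝕋 →ₗ[k] 𝕋) : 𝕋 →ₗ[k] 𝕋 →ₗ[k] 𝕋 :=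
  (LinearMap.lcomp k 𝕋 (unshuffle k M).toLinearMap ∘ₗ
    (LinearMap.llcomp k (𝕋 ⊗[k] 𝕋) (𝕋 ⊗[k] 𝕋) 𝕋 (LinearMap.mul' k 𝕋) ∘ₗ
      ((TensorProduct.mapBilinear (RingHom.id k) 𝕋 𝕋 𝕋 𝕋 LinearMap.id).comp t.flip))).flip

lemma glL_apply (t : 𝕋 →ₗ[k] 𝕋 →ₗ[k] 𝕋) (U V : 𝕋) :
    glL t U V = glProd t U V := by
  simp [glL, glProd, TensorProduct.mapBilinear_apply]

end Aux3
section Aux4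
variable {k M : Type*} [CommRing k] [AddCommGroup M] [Module k M]

local notation "𝕋" => TensorAlgebra k M
local notation "Δ" => unshuffle k M
local notation "ε" => counit k M
local notation "μ" => LinearMap.mul' k (TensorAlgebra k M)
local notation "ιp" => LinearMap.range (ι k : M →ₗ[k] TensorAlgebra k M)

variable (t : TensorAlgebra k M →ₗ[k] TensorAlgebra k M →ₗ[k] TensorAlgebra k M)
variable (m : M →ₗ[k] M →ₗ[k] M)

lemma Gaux3
    (hassoc : ∀ (x : M) (V W : 𝕋), t (ι k x * V) W = t (ι k x) (t V W) - t (t (ι k x) V) W)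
    (y : M) (z w : 𝕋 ⊗[k] 𝕋) :
    tsq t ((ι k y ⊗ₜ[k] 1 + 1 ⊗ₜ[k] ι k y) * z) w =
      TensorProduct.map (t (ι k y)) LinearMap.id (tsq t z w) +
        TensorProduct.map LinearMap.id (t (ι k y)) (tsq t z w) -
        tsq t (TensorProduct.map (t (ι k y)) LinearMap.id z +
          TensorProduct.map LinearMap.id (t (ι k y)) z) w := by
  induction z using TensorProduct.induction_on with
  | zero => simp
  | tmul a c =>
    induction w using TensorProduct.induction_on with
    | zero => simp
    | tmul v u =>
      simp only [add_mul, Algebra.TensorProduct.tmul_mul_tmul, one_mul, mul_one, map_add,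
        tsq_tmul, TensorProduct.map_tmul, LinearMap.id_coe, id_eq, LinearMap.add_apply,
        hassoc, sub_tmul, tmul_sub]
      abel
    | add w₁ w₂ h1 h2 =>
      simp only [map_add, h1, h2]
      abel
  | add z₁ z₂ h1 h2 =>
    simp only [mul_add, map_add, LinearMap.add_apply, h1, h2]
    abel

/-- `Δ` intertwines the action with the componentwise double action. -/
lemma delta_t (hone : ∀ W, t 1 W = W)
    (hcounit : ∀ U, t U 1 = algebraMap k 𝕋 (ε U))
    (hbase : ∀ x y : M, t (ι k x) (ι k y) = ι k (m x y))
    (hleib : ∀ (x : M) (V W : 𝕋), t (ι k x) (V * W) = t (ι k x) V * W + V * t (ι k x) W)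
    (hassoc : ∀ (x : M) (V W : 𝕋), t (ι k x * V) W = t (ι k x) (t V W) - t (t (ι k x) V) W) :
    ∀ U V : 𝕋, Δ (t U V) = tsq t (Δ U) (Δ V) := by
  have ht1 : t 1 = LinearMap.id := LinearMap.ext hone
  refine degree_induction (by simp) (fun a b ha hb => ?_) ?_
  · intro V
    simp only [map_add, LinearMap.add_apply, ha, hb]
  · intro n
    induction n with
    | zero =>
      intro U hU V
      rw [pow_zero, Submodule.mem_one] at hU
      obtain ⟨r, rfl⟩ := hU
      rw [Algebra.algebraMap_eq_smul_one, map_smul, LinearMap.smul_apply, ht1]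
      simp only [LinearMap.id_coe, id_eq, map_smul, LinearMap.smul_apply, map_one,
        Algebra.TensorProduct.one_def, tsq_tmul, ht1, TensorProduct.map_id]
    | succ n ih =>
      intro U hU V
      rw [pow_succ'] at hU
      refine Submodule.mul_induction_on hU ?_ ?_
      · rintro a ⟨y, rfl⟩ b hb
        have hstep := hassoc y b V
        rw [hstep, map_sub,
          delta_tι t m hcounit hbase hleib y (t b V), ih b hb V,
          ih (t (ι k y) b)
            (t_ι_mem t m hcounit hbase hleib y n b hb) V,
          delta_tι t m hcounit hbase hleib y b,
          map_mul, unshuffle_ι, Gaux3 t hassoc, map_add, LinearMap.add_apply]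
      · intro a b ha hb
        simp only [map_add, LinearMap.add_apply, ha, hb]

lemma Faux
    (hleib : ∀ (x : M) (V W : 𝕋), t (ι k x) (V * W) = t (ι k x) V * W + V * t (ι k x) W)
    (hassoc : ∀ (x : M) (V W : 𝕋), t (ι k x * V) W = t (ι k x) (t V W) - t (t (ι k x) V) W)
    (y : M) (V W : 𝕋) (z : 𝕋 ⊗[k] 𝕋) :
    μ (TensorProduct.map (t.flip V) (t.flip W) ((ι k y ⊗ₜ[k] 1 + 1 ⊗ₜ[k] ι k y) * z)) =
      t (ι k y) (μ (TensorProduct.map (t.flip V) (t.flip W) z)) -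
        μ (TensorProduct.map (t.flip V) (t.flip W)
          (TensorProduct.map (t (ι k y)) LinearMap.id z +
            TensorProduct.map LinearMap.id (t (ι k y)) z)) := by
  induction z using TensorProduct.induction_on with
  | zero => simp
  | tmul a c =>
    simp only [add_mul, Algebra.TensorProduct.tmul_mul_tmul, one_mul, mul_one, map_add,
      TensorProduct.map_tmul, LinearMap.flip_apply, LinearMap.id_coe, id_eq,
      LinearMap.mul'_apply, hassoc, hleib, sub_mul, mul_sub]
    abel
  | add z₁ z₂ h1 h2 =>
    simp only [mul_add, map_add, h1, h2]
    abel

/-- Generalized Leibniz rule. -/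
lemma leib_gen (hone : ∀ W, t 1 W = W)
    (hcounit : ∀ U, t U 1 = algebraMap k 𝕋 (ε U))
    (hbase : ∀ x y : M, t (ι k x) (ι k y) = ι k (m x y))
    (hleib : ∀ (x : M) (V W : 𝕋), t (ι k x) (V * W) = t (ι k x) V * W + V * t (ι k x) W)
    (hassoc : ∀ (x : M) (V W : 𝕋), t (ι k x * V) W = t (ι k x) (t V W) - t (t (ι k x) V) W) :
    ∀ U V W : 𝕋, t U (V * W) = μ (TensorProduct.map (t.flip V) (t.flip W) (Δ U)) := by
  refine degree_induction (by simp) (fun a b ha hb => ?_) ?_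
  · intro V W
    simp only [map_add, LinearMap.add_apply, ha, hb]
  · intro n
    induction n with
    | zero =>
      intro U hU V W
      rw [pow_zero, Submodule.mem_one] at hU
      obtain ⟨r, rfl⟩ := hU
      rw [Algebra.algebraMap_eq_smul_one, map_smul, LinearMap.smul_apply, hone,
        map_smul, map_smul, map_smul, map_one, Algebra.TensorProduct.one_def,
        TensorProduct.map_tmul, LinearMap.flip_apply, LinearMap.flip_apply, hone, hone,
        LinearMap.mul'_apply]
    | succ n ih =>
      intro U hU V W
      rw [pow_succ'] at hU
      refine Submodule.mul_induction_on hU ?_ ?_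
      · rintro a ⟨y, rfl⟩ b hb
        rw [hassoc y b (V * W), ih b hb V W,
          ih (t (ι k y) b) (t_ι_mem t m hcounit hbase hleib y n b hb) V W,
          delta_tι t m hcounit hbase hleib y b,
          map_mul, unshuffle_ι, Faux t hleib hassoc]
      · intro a b ha hb
        simp only [map_add, LinearMap.add_apply, ha, hb]

lemma Kaux
    (hleib : ∀ (x : M) (V W : 𝕋), t (ι k x) (V * W) = t (ι k x) V * W + V * t (ι k x) W)
    (hassoc : ∀ (x : M) (V W : 𝕋), t (ι k x * V) W = t (ι k x) (t V W) - t (t (ι k x) V) W)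
    (y : M) (V : 𝕋) (z : 𝕋 ⊗[k] 𝕋) :
    μ (TensorProduct.map LinearMap.id (t.flip V) ((ι k y ⊗ₜ[k] 1 + 1 ⊗ₜ[k] ι k y) * z)) =
      ι k y * μ (TensorProduct.map LinearMap.id (t.flip V) z) +
        t (ι k y) (μ (TensorProduct.map LinearMap.id (t.flip V) z)) -
        μ (TensorProduct.map LinearMap.id (t.flip V)
          (TensorProduct.map (t (ι k y)) LinearMap.id z +
            TensorProduct.map LinearMap.id (t (ι k y)) z)) := by
  induction z using TensorProduct.induction_on with
  | zero => simp
  | tmul a c =>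
    simp only [add_mul, Algebra.TensorProduct.tmul_mul_tmul, one_mul, mul_one, map_add,
      TensorProduct.map_tmul, LinearMap.flip_apply, LinearMap.id_coe, id_eq,
      LinearMap.mul'_apply, hassoc, hleib, sub_mul, mul_sub, mul_assoc]
    abel
  | add z₁ z₂ h1 h2 =>
    simp only [mul_add, map_add, h1, h2, mul_assoc]
    abel

/-- The key identity `U ▷ (V ▷ W) = (U ∗ V) ▷ W`. -/
lemma key (hone : ∀ W, t 1 W = W)
    (hcounit : ∀ U, t U 1 = algebraMap k 𝕋 (ε U))
    (hbase : ∀ x y : M, t (ι k x) (ι k y) = ι k (m x y))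
    (hleib : ∀ (x : M) (V W : 𝕋), t (ι k x) (V * W) = t (ι k x) V * W + V * t (ι k x) W)
    (hassoc : ∀ (x : M) (V W : 𝕋), t (ι k x * V) W = t (ι k x) (t V W) - t (t (ι k x) V) W) :
    ∀ U V W : 𝕋, t U (t V W) = t (glL t U V) W := by
  refine degree_induction (by simp) (fun a b ha hb => ?_) ?_
  · intro V W
    simp only [map_add, LinearMap.add_apply, ha, hb]
  · intro n
    induction n with
    | zero =>
      intro U hU V W
      rw [pow_zero, Submodule.mem_one] at hU
      obtain ⟨r, rfl⟩ := hU
      have h1 : glL t (algebraMap k 𝕋 r) V = r • V := by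
        rw [Algebra.algebraMap_eq_smul_one, map_smul, LinearMap.smul_apply]
        have : glL t 1 V = V := by
          rw [glL_apply, glProd]
          rw [map_one, Algebra.TensorProduct.one_def, TensorProduct.map_tmul,
            LinearMap.id_coe, id_eq, LinearMap.flip_apply, hone, LinearMap.mul'_apply, one_mul]
        rw [this]
      rw [h1, Algebra.algebraMap_eq_smul_one, map_smul, LinearMap.smul_apply, hone,
        map_smul, LinearMap.smul_apply]
    | succ n ih =>
      intro U hU V W
      rw [pow_succ'] at hU
      refine Submodule.mul_induction_on hU ?_ ?_
      · rintro a ⟨y, rfl⟩ b hb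
        have hX : glL t (ι k y * b) V =
            ι k y * glL t b V + t (ι k y) (glL t b V) - glL t (t (ι k y) b) V := by
          rw [glL_apply, glL_apply, glL_apply, glProd, glProd, glProd,
            map_mul, unshuffle_ι, Kaux t hleib hassoc,
            delta_tι t m hcounit hbase hleib y b]
        rw [hX, hassoc y b (t V W), ih b hb V W,
          ih (t (ι k y) b) (t_ι_mem t m hcounit hbase hleib y n b hb) V W]
        have hY : t (ι k y) (t (glL t b V) W) =
            t (ι k y * glL t b V) W + t (t (ι k y) (glL t b V)) W := by
          rw [hassoc y (glL t b V) W]; abel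
        rw [hY]
        simp only [map_add, map_sub, LinearMap.add_apply, LinearMap.sub_apply]
      · intro a b ha hb
        simp only [map_add, LinearMap.add_apply, ha, hb]

end Aux4
set_option synthInstance.maxHeartbeats 1000000
set_option maxHeartbeats 1000000

section Aux5
variable {k M : Type*} [CommRing k] [AddCommGroup M] [Module k M]

local notation "𝕋" => TensorAlgebra k M
local notation "Δ" => unshuffle k M
local notation "Dl" => AlgHom.toLinearMap (unshuffle k M)
local notation "ε" => counit k M
local notation "μ" => LinearMap.mul' k (TensorAlgebra k M)
local notation "μ₂" => LinearMap.mul' k (TensorAlgebra k M ⊗[k] TensorAlgebra k M)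

variable (t : TensorAlgebra k M →ₗ[k] TensorAlgebra k M →ₗ[k] TensorAlgebra k M)
variable (m : M →ₗ[k] M →ₗ[k] M)

lemma glProd_def (U V : 𝕋) :
    glProd t U V = μ (TensorProduct.map LinearMap.id (t.flip V) (Δ U)) := rfl

lemma delta_mul (z : 𝕋 ⊗[k] 𝕋) : Δ (μ z) = μ₂ (TensorProduct.map Dl Dl z) := by
  induction z using TensorProduct.induction_on with
  | zero => simp
  | tmul a b => simp [LinearMap.mul'_apply]
  | add x y hx hy => simp [hx, hy]

lemma tsq_tmul_right (s : 𝕋 →ₗ[k] 𝕋 →ₗ[k] 𝕋) (z : 𝕋 ⊗[k] 𝕋) (v u : 𝕋) :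
    tsq s z (v ⊗ₜ[k] u) = TensorProduct.map (s.flip v) (s.flip u) z := by
  induction z using TensorProduct.induction_on with
  | zero => simp
  | tmul a b => simp [tsq_tmul]
  | add x y hx hy => simp [map_add, LinearMap.add_apply, hx, hy]

lemma main' (z₁ z₂ : 𝕋 ⊗[k] 𝕋) (v u : 𝕋) :
    μ₂ (TensorProduct.map LinearMap.id ((tsq t).flip (v ⊗ₜ[k] u))
        (TensorProduct.tensorTensorTensorComm k 𝕋 𝕋 𝕋 𝕋 (z₁ ⊗ₜ[k] z₂))) =
      μ (TensorProduct.map LinearMap.id (t.flip v) z₁) ⊗ₜ[k]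
        μ (TensorProduct.map LinearMap.id (t.flip u) z₂) := by
  induction z₁ using TensorProduct.induction_on with
  | zero => simp
  | tmul a₁ a₂ =>
    induction z₂ using TensorProduct.induction_on with
    | zero => simp
    | tmul b₁ b₂ =>
      simp [TensorProduct.tensorTensorTensorComm_tmul, LinearMap.mul'_apply,
        tsq_tmul, Algebra.TensorProduct.tmul_mul_tmul, LinearMap.flip_apply]
    | add w₁ w₂ h1 h2 =>
      simp only [tmul_add, map_add, h1, h2, add_tmul, tmul_add]
  | add w₁ w₂ h1 h2 =>
    simp only [add_tmul, map_add, h1, h2, add_tmul]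

lemma main (z w : 𝕋 ⊗[k] 𝕋) :
    μ₂ (TensorProduct.map LinearMap.id ((tsq t).flip w)
        (TensorProduct.tensorTensorTensorComm k 𝕋 𝕋 𝕋 𝕋 (TensorProduct.map Dl Dl z))) =
      tsq (glL t) z w := by
  induction z using TensorProduct.induction_on with
  | zero => simp
  | tmul a b =>
    induction w using TensorProduct.induction_on with
    | zero => simp
    | tmul v u =>
      rw [TensorProduct.map_tmul, main', tsq_tmul]
      rw [TensorProduct.map_tmul, glL_apply, glL_apply, glProd_def, glProd_def]
      simp [AlgHom.toLinearMap_apply]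
    | add w₁ w₂ h1 h2 =>
      simp only [map_add, LinearMap.add_apply, TensorProduct.map_add_right, h1, h2]
  | add z₁ z₂ h1 h2 =>
    simp only [map_add, LinearMap.add_apply, h1, h2]

/-- `Δ` is a morphism for the GL product. -/
lemma delta_gl (hone : ∀ W, t 1 W = W)
    (hcounit : ∀ U, t U 1 = algebraMap k 𝕋 (ε U))
    (hbase : ∀ x y : M, t (ι k x) (ι k y) = ι k (m x y))
    (hleib : ∀ (x : M) (V W : 𝕋), t (ι k x) (V * W) = t (ι k x) V * W + V * t (ι k x) W)
    (hassoc : ∀ (x : M) (V W : 𝕋), t (ι k x * V) W = t (ι k x) (t V W) - t (t (ι k x) V) W)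
    (U V : 𝕋) : Δ (glL t U V) = tsq (glL t) (Δ U) (Δ V) := by
  have hcomp : Dl ∘ₗ t.flip V = ((tsq t).flip (Δ V)) ∘ₗ Dl := by
    apply LinearMap.ext; intro b
    simpa [LinearMap.flip_apply] using delta_t t m hone hcounit hbase hleib hassoc b V
  have e1 : Δ (glL t U V) = μ₂ (TensorProduct.map Dl Dl
      (TensorProduct.map LinearMap.id (t.flip V) (Δ U))) := by
    rw [glL_apply, glProd_def, delta_mul]
  have e2 : TensorProduct.map Dl Dl (TensorProduct.map LinearMap.id (t.flip V) (Δ U)) =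
      TensorProduct.map LinearMap.id ((tsq t).flip (Δ V))
        (TensorProduct.map Dl Dl (Δ U)) := by
    rw [← LinearMap.comp_apply, ← TensorProduct.map_comp]
    have e2' : TensorProduct.map (Dl ∘ₗ LinearMap.id) (Dl ∘ₗ t.flip V) =
        TensorProduct.map (LinearMap.id ∘ₗ Dl) ((((tsq t).flip (Δ V))) ∘ₗ Dl) := by
      rw [hcomp]; simp
    rw [e2', TensorProduct.map_comp, LinearMap.comp_apply]
  rw [e1, e2, ← swap23 U, main]

lemma asm2 (v u W : 𝕋) (Y : (𝕋 ⊗[k] 𝕋) ⊗[k] 𝕋) :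
    μ (TensorProduct.map (μ ∘ₗ TensorProduct.map LinearMap.id (t.flip v))
        (t.flip (t u W)) Y) =
      μ (TensorProduct.map LinearMap.id
        (μ ∘ₗ TensorProduct.map (t.flip v) (t.flip (t u W)))
        (TensorProduct.assoc k 𝕋 𝕋 𝕋 Y)) := by
  induction Y using TensorProduct.induction_on with
  | zero => simp
  | tmul z c =>
    induction z using TensorProduct.induction_on with
    | zero => simp
    | tmul a b => simp [LinearMap.mul'_apply, TensorProduct.assoc_tmul, mul_assoc]
    | add z₁ z₂ h1 h2 => simp only [add_tmul, map_add, h1, h2]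
  | add Y₁ Y₂ h1 h2 => simp only [map_add, h1, h2]

lemma asm1 (hone : ∀ W, t 1 W = W)
    (hcounit : ∀ U, t U 1 = algebraMap k 𝕋 (ε U))
    (hbase : ∀ x y : M, t (ι k x) (ι k y) = ι k (m x y))
    (hleib : ∀ (x : M) (V W : 𝕋), t (ι k x) (V * W) = t (ι k x) V * W + V * t (ι k x) W)
    (hassoc : ∀ (x : M) (V W : 𝕋), t (ι k x * V) W = t (ι k x) (t V W) - t (t (ι k x) V) W)
    (U v u W : 𝕋) :
    μ (TensorProduct.map LinearMap.id (t.flip W) (tsq (glL t) (Δ U) (v ⊗ₜ[k] u))) =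
      μ (TensorProduct.map LinearMap.id (t.flip (v * t u W)) (Δ U)) := by
  rw [tsq_tmul_right]
  have e1 : t.flip W ∘ₗ (glL t).flip u = t.flip (t u W) := by
    apply LinearMap.ext; intro b
    simp only [LinearMap.comp_apply, LinearMap.flip_apply]
    exact (key t m hone hcounit hbase hleib hassoc b u W).symm
  have e2 : (glL t).flip v = (μ ∘ₗ TensorProduct.map LinearMap.id (t.flip v)) ∘ₗ Dl := by
    apply LinearMap.ext; intro a
    rw [LinearMap.flip_apply, glL_apply, glProd_def]; rfl
  have e3 : t.flip (v * t u W) =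
      (μ ∘ₗ TensorProduct.map (t.flip v) (t.flip (t u W))) ∘ₗ Dl := by
    apply LinearMap.ext; intro b
    simp only [LinearMap.comp_apply, LinearMap.flip_apply, AlgHom.toLinearMap_apply]
    exact leib_gen t m hone hcounit hbase hleib hassoc b v (t u W)
  have eA : TensorProduct.map LinearMap.id (t.flip W)
        (TensorProduct.map ((glL t).flip v) ((glL t).flip u) (Δ U)) =
      TensorProduct.map ((glL t).flip v) (t.flip (t u W)) (Δ U) := by
    rw [← LinearMap.comp_apply, ← TensorProduct.map_comp, e1]
    simp
  rw [eA, e2, e3]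
  have e4 : TensorProduct.map ((μ ∘ₗ TensorProduct.map LinearMap.id (t.flip v)) ∘ₗ Dl)
        (t.flip (t u W)) =
      (TensorProduct.map (μ ∘ₗ TensorProduct.map LinearMap.id (t.flip v)) (t.flip (t u W))) ∘ₗ
        (TensorProduct.map Dl LinearMap.id) := by
    rw [← TensorProduct.map_comp]; simp
  have e5 : TensorProduct.map (LinearMap.id : 𝕋 →ₗ[k] 𝕋)
        ((μ ∘ₗ TensorProduct.map (t.flip v) (t.flip (t u W))) ∘ₗ Dl) =
      (TensorProduct.map (LinearMap.id : 𝕋 →ₗ[k] 𝕋)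
        (μ ∘ₗ TensorProduct.map (t.flip v) (t.flip (t u W)))) ∘ₗ
        (TensorProduct.map (LinearMap.id : 𝕋 →ₗ[k] 𝕋) Dl) := by
    rw [← TensorProduct.map_comp]; simp
  rw [e4, e5, LinearMap.comp_apply, LinearMap.comp_apply, ← coassoc U, asm2]

lemma fin (hone : ∀ W, t 1 W = W)
    (hcounit : ∀ U, t U 1 = algebraMap k 𝕋 (ε U))
    (hbase : ∀ x y : M, t (ι k x) (ι k y) = ι k (m x y))
    (hleib : ∀ (x : M) (V W : 𝕋), t (ι k x) (V * W) = t (ι k x) V * W + V * t (ι k x) W)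
    (hassoc : ∀ (x : M) (V W : 𝕋), t (ι k x * V) W = t (ι k x) (t V W) - t (t (ι k x) V) W)
    (U W : 𝕋) (w : 𝕋 ⊗[k] 𝕋) :
    μ (TensorProduct.map LinearMap.id (t.flip W) (tsq (glL t) (Δ U) w)) =
      μ (TensorProduct.map LinearMap.id
        (t.flip (μ (TensorProduct.map LinearMap.id (t.flip W) w))) (Δ U)) := by
  induction w using TensorProduct.induction_on with
  | zero => simp
  | tmul v u =>
    rw [asm1 t m hone hcounit hbase hleib hassoc U v u W]
    simp [LinearMap.mul'_apply]
  | add w₁ w₂ h1 h2 =>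
    simp only [map_add, LinearMap.add_apply, TensorProduct.map_add_right, h1, h2]

end Aux5
/-- The Grossman–Larson product `U ∗ V := U₍₁₎·(U₍₂₎▷V)` on the tensor
algebra over a magmatic algebra is associative with unit `1`. -/
theorem glProd_associative_unital {k M : Type*} [CommRing k] [AddCommGroup M] [Module k M]
    (m : M →ₗ[k] M →ₗ[k] M)
    (t : TensorAlgebra k M →ₗ[k] TensorAlgebra k M →ₗ[k] TensorAlgebra k M)
    (hone : ∀ W, t 1 W = W)
    (hcounit : ∀ U, t U 1 = algebraMap k (TensorAlgebra k M) (counit k M U))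
    (hbase : ∀ x y : M, t (ι k x) (ι k y) = ι k (m x y))
    (hleib : ∀ (x : M) (V W : TensorAlgebra k M),
      t (ι k x) (V * W) = t (ι k x) V * W + V * t (ι k x) W)
    (hassoc : ∀ (x : M) (V W : TensorAlgebra k M),
      t (ι k x * V) W = t (ι k x) (t V W) - t (t (ι k x) V) W) :
    (∀ U V W : TensorAlgebra k M, glProd t (glProd t U V) W = glProd t U (glProd t V W)) ∧
    (∀ V : TensorAlgebra k M, glProd t 1 V = V) ∧
    (∀ U : TensorAlgebra k M, glProd t U 1 = U) := by
  refine ⟨?_, ?_, ?_⟩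
  · intro U V W
    calc glProd t (glProd t U V) W
        = glProd t (glL t U V) W := by rw [glL_apply]
      _ = LinearMap.mul' k (TensorAlgebra k M) (TensorProduct.map LinearMap.id (t.flip W)
            (unshuffle k M (glL t U V))) := glProd_def t _ W
      _ = LinearMap.mul' k (TensorAlgebra k M) (TensorProduct.map LinearMap.id (t.flip W)
            (tsq (glL t) (unshuffle k M U) (unshuffle k M V))) := by
          rw [delta_gl t m hone hcounit hbase hleib hassoc U V]
      _ = LinearMap.mul' k (TensorAlgebra k M) (TensorProduct.map LinearMap.id
            (t.flip (LinearMap.mul' k (TensorAlgebra k M)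
              (TensorProduct.map LinearMap.id (t.flip W) (unshuffle k M V))))
            (unshuffle k M U)) := fin t m hone hcounit hbase hleib hassoc U W _
      _ = glProd t U (glProd t V W) := by rw [← glProd_def, ← glProd_def]
  · intro V
    rw [glProd_def, map_one, Algebra.TensorProduct.one_def, TensorProduct.map_tmul]
    simp [LinearMap.mul'_apply, hone]
  · intro U
    have h : t.flip (1 : TensorAlgebra k M) =
        (Algebra.linearMap k (TensorAlgebra k M)).comp (counit k M).toLinearMap := by
      apply LinearMap.ext; intro U'
      simp [LinearMap.flip_apply, hcounit]
    rw [glProd_def, h]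
    exact counit_right U
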